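/- arXiv:1010.4220 — 3 statements merged into one kernel-verified Lean document; each statement's English description precedes it below -/
import Mathlib

section
/- Let A and B be groups and let P = A ∗ B be their free product, with canonical embeddings inl : A → P and inr : B → P. For every u ∈ P there exists a ∈ A such that, setting u' = inl(a)·u, the canonical homomorphism from the free product A ∗ ⟨u'⟩ (the free product of A with the subgroup of P generated by u') into P, induced by inl on the factor A and by the subgroup inclusion on the factor ⟨u'⟩, is injective, and its image is the subgroup of P generated by inl(A) ∪ {u}. In other words, ⟨A, u⟩ = A ∗ ⟨u'⟩ for some u' ∈ A·u. -/
open Monoid Subgroup Function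
open scoped Pointwise

namespace FFE
section Gen
variable {ι : Type*} {M : ι → Type*} [∀ i, Group (M i)]
open CoprodI

variable {ι : Type*} {M : ι → Type*} [∀ i, Group (M i)]

theorem word_prod_injective : Function.Injective (Word.prod : Word M → CoprodI M) := by
  classical exact (Word.equiv (M := M)).symm.injective

theorem neword_prod_ne_one {i j} (w : NeWord M i j) : w.prod ≠ 1 := by
  intro h
  have h2 : w.toWord.prod = (Word.empty : Word M).prod := by
    rw [Word.prod_empty]; exact h
  have := word_prod_injective h2
  exact w.toList_ne_nil (by rw [show w.toList = w.toWord.toList from rfl, this]; rfl)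

theorem neword_head_eq {i j i' j'} (w : NeWord M i j) (w' : NeWord M i' j')
    (h : w.prod = w'.prod) : i = i' ∧ j = j' := by
  have hw : w.toWord = w'.toWord := word_prod_injective h
  have hl : w.toList = w'.toList := congrArg Word.toList hw
  constructor
  · have h1 := w.toList_head?
    have h2 := w'.toList_head?
    rw [hl, h2] at h1
    exact (Sigma.mk.inj_iff.mp (Option.some.inj h1)).1.symm
  · have h1 := w.toList_getLast?
    have h2 := w'.toList_getLast?
    rw [hl, h2] at h1
    exact (Sigma.mk.inj_iff.mp (Option.some.inj h1)).1.symm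

theorem exists_neword_of_ne_one {q : CoprodI M} (h : q ≠ 1) :
    ∃ (i j : ι) (w : NeWord M i j), w.prod = q := by
  classical
  have hq : Word.prod (Word.equiv q) = q := (Word.equiv (M := M)).symm_apply_apply q
  have hne : Word.equiv q ≠ Word.empty := by
    intro he
    apply h
    rw [← hq, he, Word.prod_empty]
  obtain ⟨i, j, w', hw'⟩ := NeWord.of_word (Word.equiv q) hne
  exact ⟨i, j, w', by rw [show w'.prod = w'.toWord.prod from rfl, hw', hq]⟩


theorem neword_inv_length {i j} (w : NeWord M i j) :
    w.inv.toList.length = w.toList.length := by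
  induction w with
  | singleton x hx => rfl
  | append w₁ hne w₂ ih₁ ih₂ => simp [NeWord.inv, ih₁, ih₂, Nat.add_comm]

theorem peel_head {i j} (nw : NeWord M i j) :
    (i = j ∧ ∃ m : M i, nw.prod = CoprodI.of m) ∨
    ∃ (k : ι) (m : M i) (t : NeWord M k j), m ≠ 1 ∧ k ≠ i ∧
      nw.prod = CoprodI.of m * t.prod ∧ t.toList.length < nw.toList.length := by
  induction nw with
  | singleton x hx => exact Or.inl ⟨rfl, x, (NeWord.prod_singleton x hx).symm⟩
  | @append i j₁ k₁ j w₁ hne w₂ ih₁ ih₂ =>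
    rcases ih₁ with ⟨hj, m, hm⟩ | ⟨k, m, t, hm, hk, hp, hl⟩
    · subst hj
      refine Or.inr ⟨k₁, m, w₂, ?_, hne.symm, ?_, ?_⟩
      · intro h
        exact neword_prod_ne_one w₁ (by rw [hm, h, map_one])
      · rw [NeWord.append_prod, hm]
      · have h1 : 0 < w₁.toList.length := List.length_pos_iff.mpr w₁.toList_ne_nil
        simp only [NeWord.toList, List.length_append]
        omega
    · refine Or.inr ⟨k, m, NeWord.append t hne w₂, hm, hk, ?_, ?_⟩
      · rw [NeWord.append_prod, NeWord.append_prod, hp, mul_assoc]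
      · simp only [NeWord.toList, List.length_append]
        omega

theorem peel_last {i j} (nw : NeWord M i j) :
    (i = j ∧ ∃ m : M j, nw.prod = CoprodI.of m) ∨
    ∃ (k : ι) (m : M j) (t : NeWord M i k), m ≠ 1 ∧ k ≠ j ∧
      nw.prod = t.prod * CoprodI.of m ∧ t.toList.length < nw.toList.length := by
  have hinv : nw.prod = nw.inv.prod⁻¹ := by rw [NeWord.inv_prod, inv_inv]
  rcases peel_head nw.inv with ⟨hj, m, hm⟩ | ⟨k, m, t, hm, hk, hp, hl⟩
  · exact Or.inl ⟨hj.symm, m⁻¹, by rw [hinv, hm, ← map_inv]⟩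
  · refine Or.inr ⟨k, m⁻¹, t.inv, inv_ne_one.mpr hm, hk, ?_, ?_⟩
    · rw [hinv, hp, mul_inv_rev, NeWord.inv_prod, map_inv]
    · rw [neword_inv_length, ← neword_inv_length nw]
      exact hl

theorem pow_chunk {k l i} (mid : NeWord M k l) (d : M i) (hd : d ≠ 1)
    (hki : i ≠ k) (hli : l ≠ i) (n : ℕ) :
    ∃ p : NeWord M k l, p.prod = mid.prod * (CoprodI.of d * mid.prod) ^ n := by
  induction n with
  | zero => exact ⟨mid, by simp⟩
  | succ n ih =>
    obtain ⟨p, hp⟩ := ih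
    refine ⟨NeWord.append (NeWord.append mid hli (NeWord.singleton d hd)) hki p, ?_⟩
    rw [NeWord.append_prod, NeWord.append_prod, NeWord.prod_singleton, hp, pow_succ']
    simp [mul_assoc]

theorem pow_simple {k l} (hkl : k ≠ l) (mid : NeWord M k l) (n : ℕ) :
    ∃ p : NeWord M k l, p.prod = mid.prod ^ (n + 1) := by
  induction n with
  | zero => exact ⟨mid, by simp⟩
  | succ n ih =>
    obtain ⟨p, hp⟩ := ih
    exact ⟨NeWord.append mid hkl.symm p, by rw [NeWord.append_prod, hp]; exact (pow_succ' _ _).symm⟩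

theorem abpow (a b : CoprodI M) (n : ℕ) : (a * b) ^ (n + 1) = a * (b * a) ^ n * b := by
  induction n with
  | zero => simp
  | succ n ih => rw [pow_succ', ih, pow_succ' (b*a)]; simp [mul_assoc]

theorem pow_neword : ∀ (N : ℕ) {i : ι} (nw : NeWord M i i), nw.toList.length ≤ N →
    ∀ n : ℤ, nw.prod ^ n ≠ 1 → ∃ nw' : NeWord M i i, nw'.prod = nw.prod ^ n := by
  intro N
  induction N with
  | zero =>
    intro i nw h
    have := List.length_pos_iff.mpr nw.toList_ne_nil
    omega
  | succ N ih =>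
    intro i nw hlen n hn
    have hn0 : n ≠ 0 := by rintro rfl; simp at hn
    have negred : (∀ m : ℕ, ∃ p : NeWord M i i, p.prod = nw.prod ^ ((m : ℤ) + 1)) →
        ∃ nw' : NeWord M i i, nw'.prod = nw.prod ^ n := by
      intro hpos
      rcases lt_or_gt_of_ne hn0 with h | h
      · obtain ⟨m, hm⟩ : ∃ m : ℕ, n = -((m : ℤ) + 1) := ⟨(-n - 1).toNat, by omega⟩
        obtain ⟨p, hp⟩ := hpos m
        exact ⟨p.inv, by rw [NeWord.inv_prod, hp, ← zpow_neg, ← hm]⟩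
      · obtain ⟨m, hm⟩ : ∃ m : ℕ, n = (m : ℤ) + 1 := ⟨(n - 1).toNat, by omega⟩
        obtain ⟨p, hp⟩ := hpos m
        exact ⟨p, by rw [hp, hm]⟩
    rcases peel_head nw with ⟨_, m, hm⟩ | ⟨k, m₁, t, hm₁, hki, hp, hl⟩
    · refine ⟨NeWord.singleton (m ^ n) ?_, ?_⟩
      · intro h; apply hn; rw [hm, ← map_zpow, h, map_one]
      · rw [NeWord.prod_singleton, hm, map_zpow]
    · rcases peel_last t with ⟨hk', -⟩ | ⟨l, m₂, mid, hm₂, hl2, hp2, hlen2⟩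
      · exact absurd hk' hki
      have hv : nw.prod = CoprodI.of m₁ * mid.prod * CoprodI.of m₂ := by
        rw [hp, hp2, mul_assoc]
      by_cases hd : m₂ * m₁ = 1
      · have hm2 : m₂ = m₁⁻¹ := eq_inv_of_mul_eq_one_left hd
        have hv' : ∀ z : ℤ, nw.prod ^ z = CoprodI.of m₁ * mid.prod ^ z * (CoprodI.of m₁)⁻¹ := by
          intro z
          rw [hv, hm2, map_inv, conj_zpow]
        by_cases hkl : k = l
        · subst hkl
          have hmidn : mid.prod ^ n ≠ 1 := by
            intro h; apply hn; rw [hv' n, h]; group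
          obtain ⟨z, hz⟩ := ih mid (by omega) n hmidn
          refine ⟨NeWord.append (NeWord.append (NeWord.singleton m₁ hm₁) (Ne.symm hki) z)
            hl2 (NeWord.singleton m₁⁻¹ (inv_ne_one.mpr hm₁)), ?_⟩
          rw [NeWord.append_prod, NeWord.append_prod, NeWord.prod_singleton,
            NeWord.prod_singleton, hz, hv' n, map_inv]
        · apply negred
          intro mm
          obtain ⟨p, hp3⟩ := pow_simple hkl mid mm
          refine ⟨NeWord.append (NeWord.append (NeWord.singleton m₁ hm₁) (Ne.symm hki) p)
            hl2 (NeWord.singleton m₁⁻¹ (inv_ne_one.mpr hm₁)), ?_⟩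
          rw [NeWord.append_prod, NeWord.append_prod, NeWord.prod_singleton,
            NeWord.prod_singleton, hp3, hv' ((mm : ℤ) + 1)]
          rw [show ((mm : ℤ) + 1) = ((mm + 1 : ℕ) : ℤ) by push_cast; ring, zpow_natCast, map_inv]
      · apply negred
        intro mm
        obtain ⟨p, hp3⟩ := pow_chunk mid (m₂ * m₁) hd (Ne.symm hki) hl2 mm
        have h1 : nw.prod ^ ((mm : ℤ) + 1) =
            (CoprodI.of m₁ * mid.prod) * (CoprodI.of m₂ * (CoprodI.of m₁ * mid.prod)) ^ mm
              * CoprodI.of m₂ := by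
          rw [show ((mm : ℤ) + 1) = ((mm + 1 : ℕ) : ℤ) by push_cast; ring, zpow_natCast, hv]
          exact abpow _ _ mm
        refine ⟨NeWord.append (NeWord.append (NeWord.singleton m₁ hm₁) (Ne.symm hki) p)
          hl2 (NeWord.singleton m₂ hm₂), ?_⟩
        rw [NeWord.append_prod, NeWord.append_prod, NeWord.prod_singleton,
          NeWord.prod_singleton, hp3, h1]
        simp [map_mul, mul_assoc]

end Gen

section AB
open CoprodI
variable (A B : Type*) [Group A] [Group B]

abbrev SB : Bool → Subgroup (Coprod A B) :=
  fun b => Bool.rec (Coprod.inl : A →* Coprod A B).range (Coprod.inr : B →* Coprod A B).range b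

abbrev MB : Bool → Type _ := fun b => ↥(SB A B b)

abbrev QB := CoprodI (MB A B)

def phi : Coprod A B →* QB A B :=
  Coprod.lift
    ((CoprodI.of (M := MB A B) (i := false)).comp (Coprod.inl : A →* Coprod A B).rangeRestrict)
    ((CoprodI.of (M := MB A B) (i := true)).comp (Coprod.inr : B →* Coprod A B).rangeRestrict)

def psi : QB A B →* Coprod A B := CoprodI.lift fun b => (SB A B b).subtype

theorem psi_phi : ∀ x, psi A B (phi A B x) = x := by
  intro x
  have h : (psi A B).comp (phi A B) = MonoidHom.id _ := by
    apply Coprod.hom_ext <;> ext x <;>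
      · simp only [phi, psi, MonoidHom.comp_apply, Coprod.lift_apply_inl, Coprod.lift_apply_inr,
          CoprodI.lift_of, MonoidHom.id_apply]
        rfl
  exact DFunLike.congr_fun h x

theorem phi_psi : ∀ x, phi A B (psi A B x) = x := by
  intro x
  have h : (phi A B).comp (psi A B) = MonoidHom.id _ := by
    apply CoprodI.ext_hom
    intro i
    ext ⟨x, hx⟩
    cases i with
    | false =>
      obtain ⟨a, rfl⟩ := hx
      simp [phi, psi, Coprod.lift_apply_inl, CoprodI.lift_of]
      rfl
    | true =>
      obtain ⟨b, rfl⟩ := hx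
      simp [phi, psi, Coprod.lift_apply_inr, CoprodI.lift_of]
      rfl
  exact DFunLike.congr_fun h x

theorem phi_injective : Function.Injective (phi A B) :=
  Function.LeftInverse.injective (psi_phi A B)

theorem psi_injective : Function.Injective (psi A B) :=
  Function.LeftInverse.injective (phi_psi A B)

theorem phi_coe_false (m : ↥(Coprod.inl : A →* Coprod A B).range) :
    phi A B ↑m = CoprodI.of (M := MB A B) (i := false) m := by
  obtain ⟨a, ha⟩ := m.2
  have : m = (Coprod.inl : A →* Coprod A B).rangeRestrict a := Subtype.ext ha.symm
  rw [this]
  simp [phi, Coprod.lift_apply_inl]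

theorem exists_decomp (q : QB A B) :
    ∃ a c : MB A B false,
      (CoprodI.of a * q = 1) ∨
      ∃ nw : NeWord (MB A B) true true,
        CoprodI.of a * q = CoprodI.of c * nw.prod * (CoprodI.of c)⁻¹ := by
  have inner : ∀ (jj : Bool) (t : NeWord (MB A B) true jj),
      ∃ a c : MB A B false, ∃ nw : NeWord (MB A B) true true,
        CoprodI.of a * t.prod = CoprodI.of c * nw.prod * (CoprodI.of c)⁻¹ := by
    intro jj t
    cases jj with
    | true => exact ⟨1, 1, t, by simp⟩
    | false =>
      rcases peel_last t with ⟨htf, -⟩ | ⟨l, m₂, mid, hm₂, hl2, hp2, -⟩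
      · exact absurd htf (by simp)
      cases l with
      | false => exact absurd rfl hl2
      | true =>
        refine ⟨m₂⁻¹, m₂⁻¹, mid, ?_⟩
        rw [hp2, map_inv, inv_inv]
        group
  by_cases hq : q = 1
  · exact ⟨1, 1, Or.inl (by simp [hq])⟩
  obtain ⟨i, j, w, hw⟩ := exists_neword_of_ne_one hq
  cases i with
  | true =>
    obtain ⟨a, c, nw, h⟩ := inner j w
    exact ⟨a, c, Or.inr ⟨nw, by rw [← hw]; exact h⟩⟩
  | false =>
    rcases peel_head w with ⟨-, m, hm⟩ | ⟨k, m, t, hm, hk, hp, -⟩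
    · exact ⟨m⁻¹, 1, Or.inl (by rw [← hw, hm, ← map_mul, inv_mul_cancel, map_one])⟩
    cases k with
    | false => exact absurd rfl hk
    | true =>
      obtain ⟨a₁, c₁, nw, h⟩ := inner j t
      refine ⟨a₁ * m⁻¹, c₁, Or.inr ⟨nw, ?_⟩⟩
      rw [← hw, hp, map_mul, map_inv, ← h]
      group
variable {A B}

theorem key_injective [Nontrivial A] (u' : Coprod A B) (c : MB A B false)
    (h : ∀ n : ℤ, u' ^ n ≠ 1 → ∃ nw : NeWord (MB A B) true true,
        nw.prod = (CoprodI.of c)⁻¹ * phi A B (u' ^ n) * CoprodI.of c)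
    (hne : u' ≠ 1) :
    Function.Injective
      (Coprod.lift (Coprod.inl : A →* Coprod A B) (Subgroup.zpowers u').subtype) := by
  classical
  set Q := QB A B
  set τ : Q := CoprodI.of (M := MB A B) (i := false) c with hτ
  -- the set of elements whose normal form starts with a `B`-letter
  set TT : Set Q := {q | ∃ (jj : Bool) (w : NeWord (MB A B) true jj), w.prod = q} with hTT
  have A0 : ∀ q ∈ TT, q ≠ 1 := by
    rintro q ⟨jj, w, rfl⟩
    exact neword_prod_ne_one w
  have A2 : ∀ m : MB A B false, CoprodI.of m ∉ TT := by
    intro m hmem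
    by_cases hm : m = 1
    · exact A0 _ hmem (by rw [hm, map_one])
    · obtain ⟨jj, w, hw⟩ := hmem
      have := (neword_head_eq w (NeWord.singleton m hm)
        (by rw [hw, NeWord.prod_singleton])).1
      simp at this
  have A1 : ∀ m : MB A B false, m ≠ 1 → ∀ q ∈ TT,
      CoprodI.of m * q ∉ TT ∧ CoprodI.of m * q ≠ 1 := by
    rintro m hm q ⟨jj, w, rfl⟩
    have hp : (NeWord.append (NeWord.singleton m hm) (by simp) w).prod
        = CoprodI.of m * w.prod := by
      rw [NeWord.append_prod, NeWord.prod_singleton]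
    constructor
    · rintro ⟨jj', w', hw'⟩
      have := (neword_head_eq w' (NeWord.append (NeWord.singleton m hm) (by simp) w)
        (by rw [hw', hp])).1
      simp at this
    · rw [← hp]; exact neword_prod_ne_one _
  have A3 : ∀ (z q : Q), (∃ w : NeWord (MB A B) true true, w.prod = z) → q ∉ TT →
      z * q ∈ TT := by
    rintro z q ⟨w, rfl⟩ hq
    by_cases hq1 : q = 1
    · rw [hq1, mul_one]; exact ⟨true, w, rfl⟩
    obtain ⟨kq, jq, wq, hwq⟩ := exists_neword_of_ne_one hq1
    cases kq with
    | true => exact absurd ⟨jq, wq, hwq⟩ hq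
    | false =>
      exact ⟨jq, NeWord.append w (by simp) wq, by rw [NeWord.append_prod, hwq]⟩
  -- the three-factor setup
  set S3 : Option Bool → Subgroup (Coprod A B) := fun o =>
    Option.rec ⊥ (fun b => Bool.rec (Coprod.inl : A →* Coprod A B).range (zpowers u') b) o
    with hS3
  set f3 : ∀ o : Option Bool, ↥(S3 o) →* Q := fun o => (phi A B).comp (S3 o).subtype with hf3
  set X : Option Bool → Set Q := fun o =>
    Option.rec {(1 : Q)}
      (fun b => Bool.rec {q | q ≠ 1 ∧ (τ⁻¹ * q) ∉ TT} {q | (τ⁻¹ * q) ∈ TT} b) o with hX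
  have hu'ne : u' ^ (1 : ℤ) ≠ 1 := by rwa [zpow_one]
  obtain ⟨nw₁, hnw₁⟩ := h 1 hu'ne
  have hXnonempty : ∀ o, (X o).Nonempty := by
    rintro (_ | _ | _)
    · exact ⟨1, rfl⟩
    · -- some false
      obtain ⟨a₀, ha₀⟩ := exists_ne (1 : A)
      have hm₀ : ((Coprod.inl : A →* Coprod A B).rangeRestrict a₀ : MB A B false) ≠ 1 := by
        intro h1
        apply ha₀
        have h2 := congrArg Subtype.val h1
        exact Coprod.inl_injective (by simpa using h2)
      refine ⟨CoprodI.of (M := MB A B) (i := false)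
        ((Coprod.inl : A →* Coprod A B).rangeRestrict a₀), ?_, ?_⟩
      · rw [show CoprodI.of (M := MB A B) (i := false)
            ((Coprod.inl : A →* Coprod A B).rangeRestrict a₀)
            = (NeWord.singleton _ hm₀).prod from (NeWord.prod_singleton _ _).symm]
        exact neword_prod_ne_one _
      · rw [hτ, ← map_inv, ← map_mul]
        exact A2 _
    · -- some true
      refine ⟨τ * nw₁.prod, ?_⟩
      show τ⁻¹ * (τ * nw₁.prod) ∈ TT
      rw [← mul_assoc, inv_mul_cancel, one_mul]
      exact ⟨true, nw₁, rfl⟩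
  have hτinvTT : ∀ q : Q, q ∈ X (some true) → q ≠ 1 := by
    intro q hq
    intro h1
    subst h1
    have : τ⁻¹ ∈ TT := by have h' : τ⁻¹ * 1 ∈ TT := hq; rwa [mul_one] at h'
    rw [hτ, ← map_inv] at this
    exact A2 _ this
  have hXdisj : Pairwise (Disjoint on X) := by
    intro o o' hoo'
    rw [Function.onFun, Set.disjoint_left]
    rintro q hq hq'
    match o, o' with
    | none, none => exact hoo' rfl
    | some false, some false => exact hoo' rfl
    | some true, some true => exact hoo' rfl
    | none, some false =>
      obtain rfl : q = 1 := hq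
      exact hq'.1 rfl
    | some false, none =>
      obtain rfl : q = 1 := hq'
      exact hq.1 rfl
    | none, some true =>
      obtain rfl : q = 1 := hq
      exact hτinvTT 1 hq' rfl
    | some true, none =>
      obtain rfl : q = 1 := hq'
      exact hτinvTT 1 hq rfl
    | some false, some true => exact hq.2 hq'
    | some true, some false => exact hq'.2 hq
  have hmembot : ∀ x : ↥(S3 none), x = 1 := by
    rintro ⟨x, hx⟩
    exact Subtype.ext ((Subgroup.mem_bot).mp hx)
  -- describe f3 on the true part
  have hf3true : ∀ y : ↥(S3 (some true)), y ≠ 1 →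
      ∃ w : NeWord (MB A B) true true, phi A B ↑y = τ * w.prod * τ⁻¹ := by
    rintro ⟨y, hy⟩ hyne
    obtain ⟨n, rfl⟩ := hy
    have hyne' : u' ^ n ≠ 1 := fun h1 => hyne (Subtype.ext h1)
    obtain ⟨w, hw⟩ := h n hyne'
    refine ⟨w, ?_⟩
    show phi A B (u' ^ n) = τ * w.prod * τ⁻¹
    rw [hw]
    group
  have hpp : Pairwise fun o o' => ∀ hh : ↥(S3 o), hh ≠ 1 → f3 o hh • X o' ⊆ X o := by
    intro o o' hoo'
    intro hh hhne
    rintro x ⟨y, hy, rfl⟩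
    simp only [smul_eq_mul]
    match o, o' with
    | none, _ => exact absurd (hmembot hh) hhne
    | some false, some false => exact absurd rfl hoo'
    | some true, some true => exact absurd rfl hoo'
    | some false, none =>
      obtain rfl : y = 1 := hy
      have hm : (hh : ↥((Coprod.inl : A →* Coprod A B).range)) ≠ 1 := hhne
      rw [mul_one]
      constructor
      · rw [hf3, MonoidHom.comp_apply]
        simp only [Subgroup.coe_subtype]
        rw [phi_coe_false]
        intro h1
        exact neword_prod_ne_one
          (NeWord.singleton (M := MB A B) (i := false) hh hm)
          (by rw [NeWord.prod_singleton]; exact h1)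
      · rw [hf3, MonoidHom.comp_apply]
        simp only [Subgroup.coe_subtype]
        rw [phi_coe_false, hτ, ← map_inv, ← map_mul]
        exact A2 _
    | some false, some true =>
      have hm : (hh : ↥((Coprod.inl : A →* Coprod A B).range)) ≠ 1 := hhne
      have hy' : τ⁻¹ * y ∈ TT := hy
      rw [hf3, MonoidHom.comp_apply]
      simp only [Subgroup.coe_subtype]
      rw [phi_coe_false]
      have hsplit : CoprodI.of (M := MB A B) (i := false) hh * y
          = CoprodI.of (M := MB A B) (i := false) (hh * c) * (τ⁻¹ * y) := by
        rw [map_mul, hτ]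
        simp only [mul_assoc]; exact congrArg _ (mul_inv_cancel_left _ _).symm
      constructor
      · rw [hsplit]
        by_cases hc1 : (hh : ↥((Coprod.inl : A →* Coprod A B).range)) * c = 1
        · rw [hc1, map_one, one_mul]
          exact A0 _ hy'
        · exact (A1 _ hc1 _ hy').2
      · have : τ⁻¹ * (CoprodI.of (M := MB A B) (i := false) hh * y)
            = CoprodI.of (M := MB A B) (i := false) (c⁻¹ * hh * c) * (τ⁻¹ * y) := by
          rw [map_mul, map_mul, map_inv, hτ]
          simp only [mul_assoc]; exact congrArg _ (congrArg _ (mul_inv_cancel_left _ _).symm)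
        rw [this]
        have hcc : (c⁻¹ * hh * c : MB A B false) ≠ 1 := by
          intro h1
          apply hm
          have := congrArg (fun z => c * z * c⁻¹) h1
          simpa [mul_assoc] using this
        exact (A1 _ hcc _ hy').1
    | some true, none =>
      obtain rfl : y = 1 := hy
      obtain ⟨w, hw⟩ := hf3true hh hhne
      show τ⁻¹ * (f3 (some true) hh * 1) ∈ TT
      rw [mul_one, hf3, MonoidHom.comp_apply]
      have : ((S3 (some true)).subtype) hh = (hh : Coprod A B) := rfl
      rw [this, hw]
      have : τ⁻¹ * (τ * w.prod * τ⁻¹) = w.prod * τ⁻¹ := by simp only [mul_assoc]; exact inv_mul_cancel_left τ _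
      rw [this]
      apply A3 _ _ ⟨w, rfl⟩
      rw [hτ, ← map_inv]
      exact A2 _
    | some true, some false =>
      obtain ⟨w, hw⟩ := hf3true hh hhne
      show τ⁻¹ * (f3 (some true) hh * y) ∈ TT
      rw [hf3, MonoidHom.comp_apply]
      have hs : ((S3 (some true)).subtype) hh = (hh : Coprod A B) := rfl
      rw [hs, hw]
      have : τ⁻¹ * (τ * w.prod * τ⁻¹ * y) = w.prod * (τ⁻¹ * y) := by simp only [mul_assoc]; exact inv_mul_cancel_left τ _
      rw [this]
      exact A3 _ _ ⟨w, rfl⟩ hy.2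
  have hcard : 3 ≤ Cardinal.mk (Option Bool) ∨
      ∃ o : Option Bool, 3 ≤ Cardinal.mk ↥(S3 o) := by
    left
    rw [Cardinal.mk_option, Cardinal.mk_fintype]
    norm_num
  have hping : Function.Injective (CoprodI.lift f3) :=
    CoprodI.lift_injective_of_ping_pong f3 hcard X hXnonempty hXdisj hpp
  -- the triangle
  set j : Coprod A ↥(zpowers u') →* CoprodI (fun o => ↥(S3 o)) :=
    Coprod.lift
      ((CoprodI.of (M := fun o => ↥(S3 o)) (i := some false)).comp
        (Coprod.inl : A →* Coprod A B).rangeRestrict)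
      (CoprodI.of (M := fun o => ↥(S3 o)) (i := some true)) with hj
  set r : CoprodI (fun o => ↥(S3 o)) →* Coprod A ↥(zpowers u') :=
    CoprodI.lift (fun o =>
      match o with
      | none => 1
      | some false => (Coprod.inl : A →* Coprod A (zpowers u')).comp
          (Coprod.fst.comp (Coprod.inl : A →* Coprod A B).range.subtype)
      | some true => (Coprod.inr : ↥(zpowers u') →* Coprod A (zpowers u'))) with hr
  have hrj : ∀ x, r (j x) = x := by
    intro x
    have hcomp : r.comp j = MonoidHom.id _ := by
      apply Coprod.hom_ext <;> ext z <;> rfl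
    exact DFunLike.congr_fun hcomp x
  have htri : Coprod.lift (Coprod.inl : A →* Coprod A B) (Subgroup.zpowers u').subtype
      = (psi A B).comp ((CoprodI.lift f3).comp j) := by
    apply Coprod.hom_ext
    · ext a
      simp only [MonoidHom.comp_apply, Coprod.lift_apply_inl, hj, CoprodI.lift_of, hf3]
      rw [psi_phi]
      try rfl
    · ext y
      simp only [MonoidHom.comp_apply, Coprod.lift_apply_inr, hj, CoprodI.lift_of, hf3]
      rw [psi_phi]
      try rfl
  rw [htri]
  exact (psi_injective A B).comp (hping.comp (Function.LeftInverse.injective hrj))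

end AB

end FFE

/-- If `u ∈ A ∗ B`, then `⟨A, u⟩ = A ∗ ⟨u'⟩` for some `u' ∈ A·u`: the canonical homomorphism
from the abstract free product `A ∗ ⟨u'⟩` to `A ∗ B` is injective with image `⟨A, u⟩`. -/
theorem free_factor_exercise {A B : Type*} [Group A] [Group B]
    (u : Monoid.Coprod A B) :
    ∃ a : A,
      Function.Injective
        (Monoid.Coprod.lift (Monoid.Coprod.inl : A →* Monoid.Coprod A B)
          (Subgroup.zpowers (Monoid.Coprod.inl a * u)).subtype) ∧
      (Monoid.Coprod.lift (Monoid.Coprod.inl : A →* Monoid.Coprod A B)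
          (Subgroup.zpowers (Monoid.Coprod.inl a * u)).subtype).range =
        Subgroup.closure
          (Set.range (fun x : A => (Monoid.Coprod.inl x : Monoid.Coprod A B)) ∪ {u}) := by
  classical
  have hrange : ∀ a : A,
      (Monoid.Coprod.lift (Monoid.Coprod.inl : A →* Monoid.Coprod A B)
        (Subgroup.zpowers (Monoid.Coprod.inl a * u)).subtype).range =
      Subgroup.closure
        (Set.range (fun x : A => (Monoid.Coprod.inl x : Monoid.Coprod A B)) ∪ {u}) := by
    intro a
    rw [Monoid.Coprod.range_lift, Subgroup.range_subtype, Subgroup.closure_union]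
    have h1 : Subgroup.closure
        (Set.range fun x : A => (Monoid.Coprod.inl x : Monoid.Coprod A B))
        = (Monoid.Coprod.inl : A →* Monoid.Coprod A B).range := by
      rw [← MonoidHom.coe_range, Subgroup.closure_eq]
    rw [h1, ← Subgroup.zpowers_eq_closure]
    refine le_antisymm (sup_le le_sup_left ?_) (sup_le le_sup_left ?_)
    · rw [Subgroup.zpowers_le]
      have hx : (Monoid.Coprod.inl a : Monoid.Coprod A B)
          ∈ (Monoid.Coprod.inl : A →* Monoid.Coprod A B).range := ⟨a, rfl⟩
      exact mul_mem (Subgroup.mem_sup_left hx)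
        (Subgroup.mem_sup_right (Subgroup.mem_zpowers u))
    · rw [Subgroup.zpowers_le]
      have hx : (Monoid.Coprod.inl a : Monoid.Coprod A B)
          ∈ (Monoid.Coprod.inl : A →* Monoid.Coprod A B).range := ⟨a, rfl⟩
      have hmem := mul_mem
        (inv_mem (Subgroup.mem_sup_left hx))
        (Subgroup.mem_sup_right (Subgroup.mem_zpowers (Monoid.Coprod.inl a * u)))
      simpa using hmem
  by_cases hA : Subsingleton A
  · refine ⟨1, ?_, hrange 1⟩
    set C := Subgroup.zpowers ((Monoid.Coprod.inl (1 : A) : Monoid.Coprod A B) * u) with hC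
    letI : Unique A := uniqueOfSubsingleton 1
    let eA : A ≃* PUnit.{1} := MulEquiv.ofUnique
    let E : Monoid.Coprod A ↥C ≃* ↥C :=
      (MulEquiv.coprodCongr eA (MulEquiv.refl ↥C)).trans (MulEquiv.punitCoprod ↥C)
    have hM : Monoid.Coprod.lift (Monoid.Coprod.inl : A →* Monoid.Coprod A B) C.subtype
        = C.subtype.comp E.toMonoidHom := by
      apply Monoid.Coprod.hom_ext
      · ext a
        obtain rfl : a = (1 : A) := Subsingleton.elim _ _
        simp
      · ext y
        simp [E, MulEquiv.coprodCongr, MulEquiv.punitCoprod]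
    rw [hM]
    exact (Subgroup.subtype_injective C).comp E.injective
  · have hnontriv : Nontrivial A := not_subsingleton_iff_nontrivial.mp hA
    by_cases h1 : ∃ a : A, (Monoid.Coprod.inl a : Monoid.Coprod A B) * u = 1
    · obtain ⟨a, ha⟩ := h1
      refine ⟨a, ?_, hrange a⟩
      set C := Subgroup.zpowers ((Monoid.Coprod.inl a : Monoid.Coprod A B) * u) with hC
      haveI : Subsingleton ↥C := by
        constructor
        rintro ⟨x, hx⟩ ⟨y, hy⟩
        obtain ⟨n, rfl⟩ := hx
        obtain ⟨m, rfl⟩ := hy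
        apply Subtype.ext
        show (Monoid.Coprod.inl a * u) ^ n = (Monoid.Coprod.inl a * u) ^ m
        rw [ha, one_zpow, one_zpow]
      letI : Unique ↥C := uniqueOfSubsingleton 1
      let eC : ↥C ≃* PUnit.{1} := MulEquiv.ofUnique
      let E : Monoid.Coprod A ↥C ≃* A :=
        (MulEquiv.coprodCongr (MulEquiv.refl A) eC).trans (MulEquiv.coprodPUnit A)
      have hM : Monoid.Coprod.lift (Monoid.Coprod.inl : A →* Monoid.Coprod A B) C.subtype
          = (Monoid.Coprod.inl : A →* Monoid.Coprod A B).comp E.toMonoidHom := by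
        apply Monoid.Coprod.hom_ext
        · ext z
          simp [E, MulEquiv.coprodCongr, MulEquiv.coprodPUnit]
        · ext y
          obtain rfl : y = (1 : ↥C) := Subsingleton.elim _ _
          simp
      rw [hM]
      exact Monoid.Coprod.inl_injective.comp E.injective
    · obtain ⟨a0, c0, hd⟩ := FFE.exists_decomp A B (FFE.phi A B u)
      rcases hd with hd1 | ⟨nw, hd2⟩
      · exfalso
        obtain ⟨a', ha'⟩ := a0.2
        apply h1
        refine ⟨a', ?_⟩
        apply FFE.phi_injective A B
        rw [map_mul, map_one, ha', FFE.phi_coe_false]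
        exact hd1
      · obtain ⟨a', ha'⟩ := a0.2
        have hφu' : FFE.phi A B ((Monoid.Coprod.inl a' : Monoid.Coprod A B) * u)
            = CoprodI.of (M := FFE.MB A B) (i := false) c0 * nw.prod
              * (CoprodI.of (M := FFE.MB A B) (i := false) c0)⁻¹ := by
          rw [map_mul, ha', FFE.phi_coe_false]
          exact hd2
        set u' := (Monoid.Coprod.inl a' : Monoid.Coprod A B) * u with hu'
        have hu'ne : u' ≠ 1 := by
          intro h
          apply FFE.neword_prod_ne_one nw
          have h2 : FFE.phi A B u' = 1 := by rw [h, map_one]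
          have h3 : (1 : FFE.QB A B) = CoprodI.of (M := FFE.MB A B) (i := false) c0
              * nw.prod * (CoprodI.of (M := FFE.MB A B) (i := false) c0)⁻¹ := by
            rw [← h2]; exact hφu'
          have h5 : nw.prod = (CoprodI.of (M := FFE.MB A B) (i := false) c0)⁻¹
              * (CoprodI.of (M := FFE.MB A B) (i := false) c0 * nw.prod
                * (CoprodI.of (M := FFE.MB A B) (i := false) c0)⁻¹)
              * CoprodI.of (M := FFE.MB A B) (i := false) c0 := by group
          rw [h5, ← h3]
          group
        have hcond : ∀ n : ℤ, u' ^ n ≠ 1 → ∃ w : CoprodI.NeWord (FFE.MB A B) true true,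
            w.prod = (CoprodI.of (M := FFE.MB A B) (i := false) c0)⁻¹
              * FFE.phi A B (u' ^ n) * CoprodI.of (M := FFE.MB A B) (i := false) c0 := by
          intro n hn
          have hvn : (CoprodI.of (M := FFE.MB A B) (i := false) c0)⁻¹
              * FFE.phi A B (u' ^ n) * CoprodI.of (M := FFE.MB A B) (i := false) c0
              = nw.prod ^ n := by
            rw [map_zpow, hφu', conj_zpow]
            group
          rw [hvn]
          apply FFE.pow_neword nw.toList.length nw le_rfl n
          intro hzn
          apply hn
          apply FFE.phi_injective A B
          rw [map_one, map_zpow, hφu', conj_zpow, hzn]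
          group
        exact ⟨a', FFE.key_injective u' c0 hcond hu'ne, hrange a'⟩
end

section
/- In the group Q = ⟨g, t | g³ = 1, [g,t]³ = 1⟩, the elements x = t̄⁻¹ḡt̄·ḡ and y = ḡ·t̄⁻¹ḡt̄ commute and generate a free abelian group of rank two: the group homomorphism ℤ × ℤ → Q sending (m,n) to x^m · y^n is injective. -/
/-- `C₃`, cyclic of order 3. -/
abbrev C3 : Type := Multiplicative (ZMod 3)

/-- The generator `g` of `C₃`. -/
def gC3 : C3 := Multiplicative.ofAdd (1 : ZMod 3)

/-- `F₃ = C₃ ∗ ⟨t⟩`. -/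
abbrev F3 : Type := Monoid.Coprod C3 (FreeGroup Unit)

/-- The image of `g` in `F₃`. -/
def gF : F3 := Monoid.Coprod.inl gC3

/-- The generator `t` of `F₃`. -/
def tF : F3 := Monoid.Coprod.inr (FreeGroup.of ())

/-- The word `w = [g, t] = g⁻¹t⁻¹gt`. -/
def wF : F3 := gF⁻¹ * tF⁻¹ * gF * tF

/-- `Q = ⟨g, t ∣ g³ = 1, [g,t]³ = 1⟩`. -/
abbrev Q : Type := F3 ⧸ Subgroup.normalClosure {wF ^ 3}

/-- The image of `g` in `Q`. -/
def gQ : Q := QuotientGroup.mk' (Subgroup.normalClosure {wF ^ 3}) gF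

/-- The image of `t` in `Q`. -/
def tQ : Q := QuotientGroup.mk' (Subgroup.normalClosure {wF ^ 3}) tF

/- ### Auxiliary: a permutation representation on ℤ[ω], coordinates (a,b) ↦ a + bω. -/

/-- Multiplication by `ω`. -/
def gp : Equiv.Perm (ℤ × ℤ) :=
  ⟨fun p => (-p.2, p.1 - p.2), fun p => (p.2 - p.1, -p.1),
   fun p => by obtain ⟨a,b⟩ := p; simp only [Prod.mk.injEq]; omega,
   fun p => by obtain ⟨a,b⟩ := p; simp only [Prod.mk.injEq]; omega⟩

/-- Complex conjugation followed by translation by 1. -/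
def tp : Equiv.Perm (ℤ × ℤ) :=
  ⟨fun p => (p.1 - p.2 + 1, -p.2), fun p => (p.1 - p.2 - 1, -p.2),
   fun p => by obtain ⟨a,b⟩ := p; simp only [Prod.mk.injEq]; omega,
   fun p => by obtain ⟨a,b⟩ := p; simp only [Prod.mk.injEq]; omega⟩

@[simp] lemma gp_apply (p : ℤ × ℤ) : gp p = (-p.2, p.1 - p.2) := rfl
@[simp] lemma tp_apply (p : ℤ × ℤ) : tp p = (p.1 - p.2 + 1, -p.2) := rfl
@[simp] lemma gp_inv_apply (p : ℤ × ℤ) : gp⁻¹ p = (p.2 - p.1, -p.1) := rfl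
@[simp] lemma tp_inv_apply (p : ℤ × ℤ) : tp⁻¹ p = (p.1 - p.2 - 1, -p.2) := rfl

lemma gp3 : gp ^ 3 = 1 := by
  ext p <;> simp [pow_succ, Equiv.Perm.mul_apply] <;> ring

lemma gp_pow_mod (n : ℕ) : gp ^ (n % 3) = gp ^ n := by
  conv_rhs => rw [← Nat.div_add_mod n 3]
  rw [pow_add, pow_mul, gp3, one_pow, one_mul]

/-- The homomorphism `C₃ →* Perm (ℤ×ℤ)` sending the generator to `gp`. -/
def φg : C3 →* Equiv.Perm (ℤ × ℤ) where
  toFun k := gp ^ (Multiplicative.toAdd k).val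
  map_one' := by simp [ZMod.val_zero]
  map_mul' a b := by
    show gp ^ (Multiplicative.toAdd a + Multiplicative.toAdd b).val = _
    rw [ZMod.val_add, gp_pow_mod, pow_add]

/-- The homomorphism `F₃ →* Perm (ℤ×ℤ)`. -/
def φ : F3 →* Equiv.Perm (ℤ × ℤ) :=
  Monoid.Coprod.lift φg (FreeGroup.lift fun _ => tp)

lemma φ_gF : φ gF = gp := by
  show φg gC3 = gp
  show gp ^ (Multiplicative.toAdd (Multiplicative.ofAdd (1 : ZMod 3))).val = gp
  rw [show (Multiplicative.toAdd (Multiplicative.ofAdd (1 : ZMod 3))).val = 1 from rfl, pow_one]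

lemma φ_tF : φ tF = tp := by
  show FreeGroup.lift (fun _ => tp) (FreeGroup.of ()) = tp
  simp

lemma φ_wF3 : φ (wF ^ 3) = 1 := by
  rw [map_pow, wF, map_mul, map_mul, map_mul, map_inv, map_inv, φ_gF, φ_tF]
  ext p <;> simp [pow_succ, Equiv.Perm.mul_apply] <;> ring

/-- The induced homomorphism `Q →* Perm (ℤ×ℤ)`. -/
def Φ : Q →* Equiv.Perm (ℤ × ℤ) :=
  QuotientGroup.lift (Subgroup.normalClosure {wF ^ 3}) φ (by
    intro x hx
    refine Subgroup.normalClosure_le_normal (N := φ.ker) ?_ hx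
    intro y hy
    rw [Set.mem_singleton_iff] at hy
    subst hy
    exact φ_wF3)

lemma Φ_gQ : Φ gQ = gp := φ_gF
lemma Φ_tQ : Φ tQ = tp := φ_tF

lemma hxp : tp⁻¹ * gp * tp * gp = Equiv.addLeft ((-2, -1) : ℤ × ℤ) := by
  ext p <;>
    simp [Equiv.Perm.mul_apply, Prod.fst_add, Prod.snd_add] <;> ring

lemma hyp : gp * (tp⁻¹ * gp * tp) = Equiv.addLeft ((1, -1) : ℤ × ℤ) := by
  ext p <;>
    simp [Equiv.Perm.mul_apply, Prod.fst_add, Prod.snd_add] <;> ring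

lemma Φ_x : Φ (tQ⁻¹ * gQ * tQ * gQ) = Equiv.addLeft ((-2, -1) : ℤ × ℤ) := by
  rw [map_mul, map_mul, map_mul, map_inv, Φ_gQ, Φ_tQ, hxp]

lemma Φ_y : Φ (gQ * (tQ⁻¹ * gQ * tQ)) = Equiv.addLeft ((1, -1) : ℤ × ℤ) := by
  rw [map_mul, map_mul, map_mul, map_inv, Φ_gQ, Φ_tQ, hyp]

/-- Group-theoretic lemma: if `G³ = K³ = (G⁻¹K)³ = 1` then `KG` and `GK` commute. -/
lemma comm_aux {α : Type*} [Group α] (G K : α) (hG : G ^ 3 = 1) (hK : K ^ 3 = 1)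
    (hc : (G⁻¹ * K) ^ 3 = 1) : Commute (K * G) (G * K) := by
  have hGG : G * G = G⁻¹ := by
    rw [inv_eq_of_mul_eq_one_right (a := G) (b := G ^ 2) (by rw [← pow_succ']; exact hG), sq]
  have hKK : K * K = K⁻¹ := by
    rw [inv_eq_of_mul_eq_one_right (a := K) (b := K ^ 2) (by rw [← pow_succ']; exact hK), sq]
  have key : G⁻¹ * K * (G⁻¹ * K) = K⁻¹ * G := by
    calc G⁻¹ * K * (G⁻¹ * K) = (G⁻¹ * K) ^ 2 := by rw [sq]
      _ = (G⁻¹ * K)⁻¹ :=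
          (inv_eq_of_mul_eq_one_right (by rw [← pow_succ']; exact hc)).symm
      _ = K⁻¹ * G := by group
  have h3 : K * G⁻¹ * K = G * K⁻¹ * G := by
    calc K * G⁻¹ * K = G * (G⁻¹ * K * (G⁻¹ * K)) := by group
      _ = G * (K⁻¹ * G) := by rw [key]
      _ = G * K⁻¹ * G := by rw [mul_assoc]
  show K * G * (G * K) = G * K * (K * G)
  calc K * G * (G * K) = K * (G * G) * K := by group
    _ = K * G⁻¹ * K := by rw [hGG]
    _ = G * K⁻¹ * G := h3
    _ = G * (K * K) * G := by rw [hKK]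
    _ = G * K * (K * G) := by group

lemma gQ3 : gQ ^ 3 = 1 := by
  have h : gF ^ 3 = 1 := by
    rw [gF, ← map_pow]
    have : gC3 ^ 3 = 1 := by decide
    rw [this, map_one]
  show (QuotientGroup.mk' _ gF) ^ 3 = 1
  rw [← map_pow, h, map_one]

lemma KQ3 : (tQ⁻¹ * gQ * tQ) ^ 3 = 1 := by
  have : tQ⁻¹ * gQ * tQ = tQ⁻¹ * gQ * tQ⁻¹⁻¹ := by rw [inv_inv]
  rw [this, conj_pow, gQ3, mul_one, inv_inv, inv_mul_cancel]

lemma wQ3 : (gQ⁻¹ * (tQ⁻¹ * gQ * tQ)) ^ 3 = 1 := by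
  have h : gQ⁻¹ * (tQ⁻¹ * gQ * tQ) =
      QuotientGroup.mk' (Subgroup.normalClosure {wF ^ 3}) wF := by
    simp only [wF, map_mul, map_inv]
    rw [gQ, tQ]
    group
    rfl
  rw [h, ← map_pow]
  rw [QuotientGroup.mk'_apply, QuotientGroup.eq_one_iff]
  exact Subgroup.subset_normalClosure (Set.mem_singleton _)

/-- In `Q = ⟨g, t ∣ g³ = 1, [g,t]³ = 1⟩`, the elements `x = t⁻¹gt·g` and `y = g·t⁻¹gt`
commute and generate a free abelian group of rank two. -/
theorem free_abelian_in_Q :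
    Commute (tQ⁻¹ * gQ * tQ * gQ) (gQ * (tQ⁻¹ * gQ * tQ)) ∧
      Function.Injective
        (fun p : ℤ × ℤ =>
          (tQ⁻¹ * gQ * tQ * gQ) ^ p.1 * (gQ * (tQ⁻¹ * gQ * tQ)) ^ p.2) := by
  constructor
  · exact comm_aux gQ (tQ⁻¹ * gQ * tQ) gQ3 KQ3 wQ3
  · intro p q h
    simp only at h
    have h2 := congrArg Φ h
    rw [map_mul, map_mul, map_zpow, map_zpow, map_zpow, map_zpow, Φ_x, Φ_y] at h2
    simp only [Equiv.zsmul_addLeft, ← Equiv.addLeft_add] at h2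
    have h3 := congrArg (fun e : Equiv.Perm (ℤ × ℤ) => e (0, 0)) h2
    simp only [Equiv.coe_addLeft, Prod.smul_mk, smul_eq_mul, Prod.mk_add_mk, add_zero,
      Prod.mk.injEq] at h3
    obtain ⟨h4, h5⟩ := h3
    have : p.1 = q.1 ∧ p.2 = q.2 := by constructor <;> omega
    exact Prod.ext this.1 this.2
end

section
/- If w is conjugate in F to an element of the form ι(g)·t with g ∈ G, and k ≥ 1, then G̃ is isomorphic to the free product of G with a cyclic group of order k: G̃ ≅ G ∗ (ℤ/kℤ). -/
/-- `F = G ∗ ⟨t⟩`: the free product of `G` with an infinite cyclic group. -/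
abbrev FP (G : Type*) [Group G] : Type _ := Monoid.Coprod G (FreeGroup Unit)

/-- The additional generator `t ∈ F`. -/
def tgen (G : Type*) [Group G] : FP G := Monoid.Coprod.inr (FreeGroup.of ())

/-- The canonical embedding `ι : G → F`. -/
def emb (G : Type*) [Group G] : G →* FP G := Monoid.Coprod.inl

/-- The exponent-sum homomorphism `σ : F → ℤ` killing `G` and sending `t` to `1`. -/
def expSum (G : Type*) [Group G] : FP G →* Multiplicative ℤ :=
  Monoid.Coprod.lift 1 (FreeGroup.lift fun _ => Multiplicative.ofAdd (1 : ℤ))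

/-- A word `w ∈ F` is unimodular if the exponent sum of `t` in `w` is `1`. -/
def Unimodular {G : Type*} [Group G] (w : FP G) : Prop :=
  expSum G w = Multiplicative.ofAdd (1 : ℤ)

/-- Extensionality for monoid homs out of `Multiplicative (ZMod k)`: it suffices to agree
on `ofAdd 1`. -/
lemma zmodHom_ext {k : ℕ} {P : Type*} [Group P]
    {f h : Multiplicative (ZMod k) →* P}
    (H : f (Multiplicative.ofAdd (1 : ZMod k)) = h (Multiplicative.ofAdd (1 : ZMod k))) :
    f = h := by
  refine MonoidHom.ext fun a => ?_
  obtain ⟨m, hm⟩ : ∃ m : ℤ, (m : ZMod k) = Multiplicative.toAdd a :=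
    ZMod.intCast_surjective _
  have key : ∀ f' : Multiplicative (ZMod k) →* P,
      f' (Multiplicative.ofAdd ((m : ZMod k))) =
        (f' (Multiplicative.ofAdd (1 : ZMod k))) ^ m := by
    intro f'
    have : Multiplicative.ofAdd ((m : ZMod k)) =
        (Multiplicative.ofAdd (1 : ZMod k)) ^ m := by
      rw [← ofAdd_zsmul]
      norm_num
    rw [this, map_zpow]
  have ha : a = Multiplicative.ofAdd ((m : ZMod k)) := by rw [hm]; simp
  rw [ha, key f, key h, H]

/-- If `w` is conjugate to `ι(g)·t`, then `G̃` is the free product of `G` with a cyclic group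
of order `k`. -/
theorem free_product_case {G : Type*} [Group G] (w : FP G)
    (hwc : ∃ g : G, IsConj w (emb G g * tgen G)) (k : ℕ) (hk : 1 ≤ k) :
    Nonempty
      ((FP G ⧸ Subgroup.normalClosure {w ^ k}) ≃*
        Monoid.Coprod G (Multiplicative (ZMod k))) := by
  obtain ⟨g, u, hu⟩ := hwc
  set N := Subgroup.normalClosure {w ^ k} with hN
  have hNnormal : N.Normal := Subgroup.normalClosure_normal
  have hwkN : w ^ k ∈ N := Subgroup.subset_normalClosure rfl
  set c : FP G := ↑u with hc
  have hxw : emb G g * tgen G = c * w * c⁻¹ := by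
    rw [eq_mul_inv_iff_mul_eq]
    exact hu.eq.symm
  have hxk : (emb G g * tgen G) ^ k = c * w ^ k * c⁻¹ := by
    rw [hxw]
    exact conj_pow
  -- the homomorphism `F → G ∗ ℤ/k`
  set qφ : FP G →* Monoid.Coprod G (Multiplicative (ZMod k)) :=
    Monoid.Coprod.lift Monoid.Coprod.inl
      (FreeGroup.lift fun _ =>
        Monoid.Coprod.inl g⁻¹ * Monoid.Coprod.inr (Multiplicative.ofAdd (1 : ZMod k)))
    with hqφ
  have hq_emb : ∀ a : G, qφ (emb G a) = Monoid.Coprod.inl a := fun a => by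
    simp [hqφ, emb]
  have hq_t : qφ (tgen G) =
      Monoid.Coprod.inl g⁻¹ * Monoid.Coprod.inr (Multiplicative.ofAdd (1 : ZMod k)) := by
    simp [hqφ, tgen]
  have hq_x : qφ (emb G g * tgen G) =
      Monoid.Coprod.inr (Multiplicative.ofAdd (1 : ZMod k)) := by
    rw [map_mul, hq_emb, hq_t, ← mul_assoc, ← map_mul, mul_inv_cancel, map_one, one_mul]
  have hq_xk : qφ ((emb G g * tgen G) ^ k) = 1 := by
    rw [map_pow, hq_x, ← map_pow, ← ofAdd_nsmul]
    norm_num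
  have hq_wk : qφ (w ^ k) = 1 := by
    have : w ^ k = c⁻¹ * ((emb G g * tgen G) ^ k) * c := by
      rw [hxk]; simp [mul_assoc]
    rw [this, map_mul, map_mul, hq_xk, mul_one, ← map_mul]
    simp
  have hker : N ≤ qφ.ker :=
    Subgroup.normalClosure_le_normal (by
      intro x hx
      rw [Set.mem_singleton_iff] at hx
      subst hx
      exact hq_wk)
  -- the forward map
  set π : (FP G ⧸ N) →* Monoid.Coprod G (Multiplicative (ZMod k)) :=
    QuotientGroup.lift N qφ hker with hπ
  -- the image of `ι(g)·t` in the quotient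
  set x : FP G ⧸ N := QuotientGroup.mk (emb G g * tgen G) with hx
  have hxk1 : x ^ k = 1 := by
    rw [hx, ← QuotientGroup.mk_pow, QuotientGroup.eq_one_iff, hxk]
    exact hNnormal.conj_mem _ hwkN c
  have hf : (zmultiplesHom (Additive (FP G ⧸ N)) (Additive.ofMul x)) (k : ℤ) = 0 := by
    have : (k : ℤ) • (Additive.ofMul x) = Additive.ofMul (x ^ (k : ℤ)) := by
      rw [ofMul_zpow]
    simp only [zmultiplesHom_apply, this, zpow_natCast, hxk1]
    rfl
  set ρ : Multiplicative (ZMod k) →* (FP G ⧸ N) :=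
    AddMonoidHom.toMultiplicativeLeft
      (ZMod.lift k ⟨zmultiplesHom (Additive (FP G ⧸ N)) (Additive.ofMul x), hf⟩) with hρ
  have hρ1 : ρ (Multiplicative.ofAdd (1 : ZMod k)) = x := by
    have h1 : (1 : ZMod k) = ((1 : ℤ) : ZMod k) := by norm_num
    rw [hρ, AddMonoidHom.coe_toMultiplicativeLeft]
    show Additive.toMul (ZMod.lift k _ (Multiplicative.toAdd (Multiplicative.ofAdd (1 : ZMod k)))) = x
    rw [toAdd_ofAdd, h1, ZMod.lift_coe]
    simp
  -- the inverse map
  set ψ : Monoid.Coprod G (Multiplicative (ZMod k)) →* (FP G ⧸ N) :=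
    Monoid.Coprod.lift ((QuotientGroup.mk' N).comp (emb G)) ρ with hψ
  have hcomp1 : π.comp ψ = MonoidHom.id _ := by
    apply Monoid.Coprod.hom_ext
    · ext a
      show π (ψ (Monoid.Coprod.inl a)) = Monoid.Coprod.inl a
      rw [hψ, Monoid.Coprod.lift_apply_inl, MonoidHom.comp_apply, QuotientGroup.mk'_apply,
        hπ, QuotientGroup.lift_mk]
      exact hq_emb a
    · refine zmodHom_ext ?_
      simp only [MonoidHom.comp_apply, MonoidHom.id_apply, hψ,
        Monoid.Coprod.lift_apply_inr, hρ1]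
      rw [hπ, hx]
      rw [QuotientGroup.lift_mk']
      exact hq_x
  have hcomp2 : ψ.comp π = MonoidHom.id _ := by
    apply QuotientGroup.monoidHom_ext
    apply Monoid.Coprod.hom_ext
    · ext a
      show ψ (π ((Monoid.Coprod.inl a : FP G) : FP G ⧸ N)) = ((Monoid.Coprod.inl a : FP G) : FP G ⧸ N)
      rw [hπ, QuotientGroup.lift_mk]
      have : qφ ((Monoid.Coprod.inl a : FP G)) = Monoid.Coprod.inl a := hq_emb a
      rw [this, hψ, Monoid.Coprod.lift_apply_inl]
      rfl
    · apply FreeGroup.ext_hom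
      intro i
      have hti : (Monoid.Coprod.inr (FreeGroup.of i) : FP G) = tgen G := by cases i; rfl
      show ψ (π ((Monoid.Coprod.inr (FreeGroup.of i) : FP G) : FP G ⧸ N))
          = ((Monoid.Coprod.inr (FreeGroup.of i) : FP G) : FP G ⧸ N)
      rw [hti, hπ, QuotientGroup.lift_mk, hq_t, map_mul, hψ,
        Monoid.Coprod.lift_apply_inl, Monoid.Coprod.lift_apply_inr, hρ1, hx]
      rw [MonoidHom.comp_apply, QuotientGroup.mk'_apply, ← QuotientGroup.mk_mul]
      congr 1
      rw [← mul_assoc, ← map_mul]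
      simp [emb, tgen]
  exact ⟨MonoidHom.toMulEquiv π ψ hcomp2 hcomp1⟩
end
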